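/- Let Γ = P₀P₁⋯P_m be a broken line in ℝ² (parametrized by arc length, total length T) all of whose vertices P_i are points of ℤ² and which avoids the origin. If the total winding of Γ around the origin is at least 2πN (i.e., ∫₀^T ω'(t) dt ≥ 2πN where ω is a continuous determination of the polar angle along Γ), then T ≥ 4√2·N. -/

import Mathlib

open Set

namespace Stmt11Aux


lemma norm_eq2 (x : EuclideanSpace ℝ (Fin 2)) :
    ‖x‖ = Real.sqrt ((x 0)^2 + (x 1)^2) := by
  rw [EuclideanSpace.norm_eq, Fin.sum_univ_two]
  simp [Real.norm_eq_abs, sq_abs]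

lemma inner_eq2 (x y : EuclideanSpace ℝ (Fin 2)) :
    inner ℝ x y = x 0 * y 0 + x 1 * y 1 := by
  simp [PiLp.inner_apply, RCLike.inner_apply, Fin.sum_univ_two, mul_comm]

lemma stay_nonpos {f : ℝ → ℝ} (hf : ContinuousOn f (Icc 0 1)) (h0 : f 0 = 0)
    (hsin : ∀ s ∈ Icc (0:ℝ) 1, Real.sin (f s) ≤ 0) :
    ∀ s ∈ Icc (0:ℝ) 1, f s ≤ 0 := by
  intro s hs
  by_contra hcon
  push_neg at hcon
  rcases lt_or_ge (f s) Real.pi with hlt | hge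
  · exact absurd (hsin s hs) (not_le.2 (Real.sin_pos_of_pos_of_lt_pi hcon hlt))
  · have hsub : Icc (0:ℝ) s ⊆ Icc 0 1 := Icc_subset_Icc le_rfl hs.2
    have hmem : Real.pi / 2 ∈ Icc (f 0) (f s) := by
      constructor
      · rw [h0]; positivity
      · linarith [Real.pi_pos]
    obtain ⟨t, ht, hft⟩ := intermediate_value_Icc hs.1 (hf.mono hsub) hmem
    have := hsin t (hsub ht)
    rw [hft, Real.sin_pi_div_two] at this
    linarith

lemma stay_nonneg_le_pi {f : ℝ → ℝ} (hf : ContinuousOn f (Icc 0 1)) (h0 : f 0 = 0)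
    (hsin : ∀ s ∈ Icc (0:ℝ) 1, 0 ≤ Real.sin (f s)) :
    ∀ s ∈ Icc (0:ℝ) 1, 0 ≤ f s ∧ f s ≤ Real.pi := by
  intro s hs
  constructor
  · have := stay_nonpos (f := fun t => -(f t)) (hf.neg) (by simp [h0])
      (fun t ht => by simpa using hsin t ht) s hs
    simpa using this
  · by_contra hcon
    push_neg at hcon
    rcases lt_or_ge (f s) (2 * Real.pi) with hlt | hge
    · have h1 : 0 < Real.sin (f s - Real.pi) :=
        Real.sin_pos_of_pos_of_lt_pi (by linarith) (by linarith)
      rw [Real.sin_sub_pi] at h1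
      linarith [hsin s hs]
    · have hsub : Icc (0:ℝ) s ⊆ Icc 0 1 := Icc_subset_Icc le_rfl hs.2
      have hmem : Real.pi + Real.pi / 2 ∈ Icc (f 0) (f s) := by
        constructor
        · rw [h0]; positivity
        · linarith [Real.pi_pos]
      obtain ⟨t, ht, hft⟩ := intermediate_value_Icc hs.1 (hf.mono hsub) hmem
      have h2 := hsin t (hsub ht)
      rw [hft] at h2
      simp [Real.sin_add] at h2
      linarith [h2, Real.pi_pos]

lemma lift_bound (A B : EuclideanSpace ℝ (Fin 2)) (φ : ℝ → ℝ)
    (hφ : ContinuousOn φ (Icc 0 1))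
    (hne : ∀ s ∈ Icc (0:ℝ) 1, (1 - s) • A + s • B ≠ 0)
    (hang : ∀ s ∈ Icc (0:ℝ) 1,
      (1 - s) • A + s • B = ‖(1 - s) • A + s • B‖ •
        (WithLp.toLp 2 ![Real.cos (φ s), Real.sin (φ s)] : EuclideanSpace ℝ (Fin 2))) :
    φ 1 - φ 0 ≤ 0 ∨ (0 < A 0 * B 1 - A 1 * B 0 ∧
      φ 1 - φ 0 = Real.arccos (inner ℝ A B / (‖A‖ * ‖B‖))) := by
  set u : ℝ → EuclideanSpace ℝ (Fin 2) := fun s => (1 - s) • A + s • B with hu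
  have h01 : (0:ℝ) ∈ Icc (0:ℝ) 1 := by constructor <;> norm_num
  have h11 : (1:ℝ) ∈ Icc (0:ℝ) 1 := by constructor <;> norm_num
  have hr : ∀ s ∈ Icc (0:ℝ) 1, 0 < ‖u s‖ := fun s hs => norm_pos_iff.2 (hne s hs)
  have hc0 : ∀ s ∈ Icc (0:ℝ) 1, u s 0 = ‖u s‖ * Real.cos (φ s) := by
    intro s hs
    have := congrArg (fun v => v 0) (hang s hs)
    simpa [hu, PiLp.smul_apply, smul_eq_mul] using this
  have hc1 : ∀ s ∈ Icc (0:ℝ) 1, u s 1 = ‖u s‖ * Real.sin (φ s) := by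
    intro s hs
    have := congrArg (fun v => v 1) (hang s hs)
    simpa [hu, PiLp.smul_apply, smul_eq_mul] using this
  have happ : ∀ s : ℝ, u s 0 = (1-s) * A 0 + s * B 0 ∧ u s 1 = (1-s) * A 1 + s * B 1 := by
    intro s
    constructor <;> simp [hu, PiLp.add_apply, PiLp.smul_apply, smul_eq_mul]
  have hu0 : u 0 = A := by simp [hu]
  have hu1 : u 1 = B := by simp [hu]
  -- sine identity
  have hsinid : ∀ s ∈ Icc (0:ℝ) 1,
      Real.sin (φ s - φ 0) * (‖u 0‖ * ‖u s‖) = s * (A 0 * B 1 - A 1 * B 0) := by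
    intro s hs
    have e1 : Real.sin (φ s - φ 0) = Real.sin (φ s) * Real.cos (φ 0)
        - Real.cos (φ s) * Real.sin (φ 0) := Real.sin_sub _ _
    have c00 := hc0 0 h01; have c10 := hc1 0 h01
    have c0s := hc0 s hs; have c1s := hc1 s hs
    have key : Real.sin (φ s - φ 0) * (‖u 0‖ * ‖u s‖)
        = u s 1 * u 0 0 - u s 0 * u 0 1 := by
      rw [e1, c00, c10, c0s, c1s]; ring
    rw [key, (happ s).1, (happ s).2, (happ 0).1, (happ 0).2]; ring
  rcases le_or_gt (A 0 * B 1 - A 1 * B 0) 0 with hc | hc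
  · left
    have hsneg : ∀ s ∈ Icc (0:ℝ) 1, Real.sin (φ s - φ 0) ≤ 0 := by
      intro s hs
      have h1 := hsinid s hs
      have h2 : s * (A 0 * B 1 - A 1 * B 0) ≤ 0 :=
        mul_nonpos_of_nonneg_of_nonpos hs.1 hc
      have hp := mul_pos (hr 0 h01) (hr s hs)
      have heq : Real.sin (φ s - φ 0) = s * (A 0 * B 1 - A 1 * B 0) / (‖u 0‖ * ‖u s‖) :=
        (eq_div_iff hp.ne').mpr h1
      rw [heq]
      exact div_nonpos_of_nonpos_of_nonneg h2 hp.le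
    have := stay_nonpos (f := fun s => φ s - φ 0)
      (hφ.sub continuousOn_const) (by simp) hsneg 1 h11
    simpa using this
  · right
    refine ⟨hc, ?_⟩
    have hspos : ∀ s ∈ Icc (0:ℝ) 1, 0 ≤ Real.sin (φ s - φ 0) := by
      intro s hs
      have h1 := hsinid s hs
      have h2 : 0 ≤ s * (A 0 * B 1 - A 1 * B 0) := mul_nonneg hs.1 hc.le
      have hp := mul_pos (hr 0 h01) (hr s hs)
      have heq : Real.sin (φ s - φ 0) = s * (A 0 * B 1 - A 1 * B 0) / (‖u 0‖ * ‖u s‖) :=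
        (eq_div_iff hp.ne').mpr h1
      rw [heq]
      exact div_nonneg h2 hp.le
    have hrange := stay_nonneg_le_pi (f := fun s => φ s - φ 0)
      (hφ.sub continuousOn_const) (by simp) hspos 1 h11
    -- cosine identity at 1
    have hcosid : Real.cos (φ 1 - φ 0) * (‖u 0‖ * ‖u 1‖) = inner ℝ A B := by
      have e1 : Real.cos (φ 1 - φ 0) = Real.cos (φ 1) * Real.cos (φ 0)
          + Real.sin (φ 1) * Real.sin (φ 0) := Real.cos_sub _ _
      have c00 := hc0 0 h01; have c10 := hc1 0 h01
      have c01 := hc0 1 h11; have c11 := hc1 1 h11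
      have key : Real.cos (φ 1 - φ 0) * (‖u 0‖ * ‖u 1‖)
          = u 1 0 * u 0 0 + u 1 1 * u 0 1 := by
        rw [e1, c00, c10, c01, c11]; ring
      rw [key, (happ 1).1, (happ 1).2, (happ 0).1, (happ 0).2, inner_eq2]; ring
    have hA0 : ‖A‖ ≠ 0 := by rw [← hu0]; exact (hr 0 h01).ne'
    have hB0 : ‖B‖ ≠ 0 := by rw [← hu1]; exact (hr 1 h11).ne'
    have hcos : Real.cos (φ 1 - φ 0) = inner ℝ A B / (‖A‖ * ‖B‖) := by
      rw [← hcosid, hu0, hu1]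
      field_simp
    have h1' : 0 ≤ φ 1 - φ 0 := hrange.1
    have h2' : φ 1 - φ 0 ≤ Real.pi := hrange.2
    rw [← hcos, Real.arccos_cos h1' h2']



lemma caseL4 (α p k : ℤ) (hα1 : 1 ≤ α) (hp1 : p ≤ -1) (hk : 1 ≤ k)
    (hlag2 : (p - α)^2 + k^2 = α * 4) : False := by
  have hf : (0:ℤ) ≤ (2*α + 1 - p) * (-(p+1)) :=
    mul_nonneg (by linarith) (by linarith)
  nlinarith [sq_nonneg (α - 1), hf, hk]

lemma caseL5 (α β p k : ℤ) (hα1 : 1 ≤ α) (hβ1 : 1 ≤ β) (hp1 : p ≤ -1) (hk : 1 ≤ k)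
    (hlag2 : (p - α)^2 + k^2 = α * 5) (hβval : β = 5 - α + 2*p) :
    p = -1 ∧ α * β = 2 := by
  have hf : (0:ℤ) ≤ (2*α + 1 - p) * (-(p+1)) :=
    mul_nonneg (by linarith) (by linarith)
  have hkk : 1 ≤ k^2 := by nlinarith
  have hα2 : α ≤ 2 := by nlinarith
  interval_cases α
  · have hpe : p = -1 := by
      by_contra hne
      have hple : p ≤ -2 := by omega
      nlinarith [mul_nonneg (show (0:ℤ) ≤ 4 - p by linarith)
        (show (0:ℤ) ≤ -p - 2 by linarith)]
    exact ⟨hpe, by omega⟩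
  · have hpe : p = -1 := by
      by_contra hne
      have hple : p ≤ -2 := by omega
      nlinarith [mul_nonneg (show (0:ℤ) ≤ 7 - p by linarith)
        (show (0:ℤ) ≤ -p - 2 by linarith)]
    exact ⟨hpe, by omega⟩

lemma sqrt5_key : (3:ℝ)/2 * Real.sqrt 2 ≤ Real.sqrt 5 := by
  have hs5 : Real.sqrt 5 * Real.sqrt 5 = 5 := Real.mul_self_sqrt (by norm_num)
  have hs2 : Real.sqrt 2 * Real.sqrt 2 = 2 := Real.mul_self_sqrt (by norm_num)
  nlinarith [Real.sqrt_nonneg 5, Real.sqrt_nonneg 2]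

lemma sqrt2_facts : (1:ℝ) ≤ Real.sqrt 2 ∧ Real.sqrt 2 ≤ 2 ∧ Real.sqrt 2 * Real.sqrt 2 = 2 := by
  have h := Real.sq_sqrt (by norm_num : (2:ℝ) ≥ 0)
  have hnn := Real.sqrt_nonneg 2
  refine ⟨?_, ?_, by nlinarith⟩ <;> nlinarith [h, hnn]

lemma arccos_le_arccos' {x y : ℝ} (h : x ≤ y) : Real.arccos y ≤ Real.arccos x := by
  rw [Real.arccos_eq_pi_div_two_sub_arcsin, Real.arccos_eq_pi_div_two_sub_arcsin]
  have := Real.monotone_arcsin h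
  linarith

lemma arccos_inv_sqrt2 : Real.arccos (1 / Real.sqrt 2) = Real.pi / 4 := by
  have h2 : (1:ℝ) / Real.sqrt 2 = Real.sqrt 2 / 2 := by
    have hs := sqrt2_facts
    have : Real.sqrt 2 ≠ 0 := by positivity
    field_simp
    rw [Real.sq_sqrt (by norm_num : (0:ℝ) ≤ 2)]
  rw [h2, ← Real.cos_pi_div_four, Real.arccos_cos (by positivity) (by linarith [Real.pi_pos])]

lemma geomB (a0 a1 b0 b1 : ℤ) (hA : a0^2 + a1^2 ≠ 0) (hB : b0^2 + b1^2 ≠ 0)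
    (hk : 1 ≤ a0 * b1 - a1 * b0) :
    Real.arccos (((a0 * b0 + a1 * b1 : ℤ) : ℝ) /
        (Real.sqrt ((a0:ℝ)^2 + (a1:ℝ)^2) * Real.sqrt ((b0:ℝ)^2 + (b1:ℝ)^2)))
      ≤ Real.pi / (2 * Real.sqrt 2) * Real.sqrt (((b0:ℝ) - a0)^2 + ((b1:ℝ) - a1)^2) := by
  have hs2 := sqrt2_facts
  have hpi := Real.pi_pos
  set α : ℤ := a0^2 + a1^2 with hαd
  set β : ℤ := b0^2 + b1^2 with hβd
  set p : ℤ := a0*b0 + a1*b1 with hpd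
  set k : ℤ := a0*b1 - a1*b0 with hkd
  set L2 : ℤ := (b0-a0)^2 + (b1-a1)^2 with hLd
  have eα : (a0:ℝ)^2 + (a1:ℝ)^2 = ((α : ℤ) : ℝ) := by rw [hαd]; push_cast; ring
  have eβ : (b0:ℝ)^2 + (b1:ℝ)^2 = ((β : ℤ) : ℝ) := by rw [hβd]; push_cast; ring
  have eL : ((b0:ℝ) - a0)^2 + ((b1:ℝ) - a1)^2 = ((L2 : ℤ) : ℝ) := by
    rw [hLd]; push_cast; ring
  rw [eα, eβ, eL]
  have hα1 : 1 ≤ α := by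
    have : 0 ≤ α := by positivity
    omega
  have hβ1 : 1 ≤ β := by
    have : 0 ≤ β := by positivity
    omega
  have hlag : p^2 + k^2 = α * β := by rw [hpd, hkd, hαd, hβd]; ring
  have hL2 : L2 = α + β - 2*p := by rw [hLd, hαd, hβd, hpd]; ring
  have hlag2 : (p - α)^2 + k^2 = α * L2 := by rw [hpd, hkd, hαd, hLd]; ring
  have hkR : 1 ≤ k := hk
  clear_value α β p k L2
  have hkk : 1 ≤ k^2 := by nlinarith
  have hL1 : 1 ≤ L2 := by nlinarith [hlag2, hα1, hkk, sq_nonneg (p - α)]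
  -- real positivity facts
  have hαR : (1:ℝ) ≤ (α:ℝ) := by exact_mod_cast hα1
  have hβR : (1:ℝ) ≤ (β:ℝ) := by exact_mod_cast hβ1
  have haR : 1 ≤ Real.sqrt (α:ℝ) := by
    rw [show (1:ℝ) = Real.sqrt 1 by simp]
    exact Real.sqrt_le_sqrt (by linarith)
  have hbR : 1 ≤ Real.sqrt (β:ℝ) := by
    rw [show (1:ℝ) = Real.sqrt 1 by simp]
    exact Real.sqrt_le_sqrt (by linarith)
  have hab : Real.sqrt (α:ℝ) * Real.sqrt (β:ℝ) = Real.sqrt ((α:ℝ) * (β:ℝ)) :=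
    (Real.sqrt_mul (by linarith) _).symm
  have habpos : 0 < Real.sqrt (α:ℝ) * Real.sqrt (β:ℝ) := by nlinarith
  have hcpos : 0 < Real.pi / (2 * Real.sqrt 2) := by positivity
  rcases le_or_gt 0 p with hp | hp
  · -- acute case
    rcases le_or_gt 2 L2 with hL | hL
    · -- L2 ≥ 2 : arccos ≤ π/2 ≤ c√2 ≤ c√L2
      have h1 : Real.arccos ((p:ℝ) / (Real.sqrt (α:ℝ) * Real.sqrt (β:ℝ))) ≤ Real.pi / 2 :=
        Real.arccos_le_pi_div_two.mpr (by positivity)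
      have h2 : Real.sqrt 2 ≤ Real.sqrt ((L2:ℝ)) :=
        Real.sqrt_le_sqrt (by exact_mod_cast hL)
      have h3 : Real.pi / (2 * Real.sqrt 2) * Real.sqrt 2 = Real.pi / 2 := by
        rw [div_mul_eq_mul_div, div_eq_div_iff (by positivity) (by norm_num : (2:ℝ) ≠ 0)]
        ring
      have h4 := mul_le_mul_of_nonneg_left h2 hcpos.le
      linarith
    · -- L2 = 1
      have hL2e : L2 = 1 := by omega
      have hab2i : α + β = 2*p + 1 := by omega
      have hkp : k ≤ p := by
        by_contra hcon
        push_neg at hcon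
        have hk2 : (p+1)^2 ≤ k^2 := pow_le_pow_left₀ (by linarith) (by omega) 2
        have hid : (α - β)^2 = 4*p + 1 - 4*k^2 := by
          linear_combination (α + β + 2*p + 1) * hab2i + 4 * hlag
        nlinarith [sq_nonneg (α - β), sq_nonneg p]
      have hp1 : 1 ≤ p := le_trans hk hkp
      have h2p : (α:ℤ) * β ≤ 2 * p^2 := by
        have hk2 : k^2 ≤ p^2 := pow_le_pow_left₀ (by linarith) hkp 2
        linarith [hlag]
      have hx : (1:ℝ)/Real.sqrt 2 ≤ (p:ℝ) / (Real.sqrt (α:ℝ) * Real.sqrt (β:ℝ)) := by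
        rw [div_le_div_iff₀ (by positivity) habpos]
        have hpR : (1:ℝ) ≤ (p:ℝ) := by exact_mod_cast hp1
        have h2pR : (α:ℝ) * (β:ℝ) ≤ 2 * (p:ℝ)^2 := by exact_mod_cast h2p
        have h2pR' : Real.sqrt ((α:ℝ)*(β:ℝ)) ≤ Real.sqrt (2*(p:ℝ)^2) :=
          Real.sqrt_le_sqrt h2pR
        have hsp : Real.sqrt (2*(p:ℝ)^2) = Real.sqrt 2 * (p:ℝ) := by
          rw [Real.sqrt_mul (by norm_num), Real.sqrt_sq (by linarith)]
        rw [one_mul, hab]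
        rw [hsp] at h2pR'
        linarith
      have h1 : Real.arccos ((p:ℝ) / (Real.sqrt (α:ℝ) * Real.sqrt (β:ℝ)))
          ≤ Real.pi / 4 := by
        rw [← arccos_inv_sqrt2]
        exact arccos_le_arccos' hx
      have hLR : Real.sqrt ((L2:ℝ)) = 1 := by
        rw [hL2e]; simp
      rw [hLR]
      have h22 : 2 * Real.sqrt 2 ≤ 4 := by linarith [hs2.2.1]
      have : Real.pi / 4 ≤ Real.pi / (2 * Real.sqrt 2) * 1 := by
        rw [mul_one]
        gcongr
      linarith
  · -- obtuse case
    have hp1 : p ≤ -1 := by omega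
    have hL4 : 4 ≤ L2 := by omega
    rcases le_or_gt 8 L2 with hL | hL
    · have h1 := Real.arccos_le_pi ((p:ℝ) / (Real.sqrt (α:ℝ) * Real.sqrt (β:ℝ)))
      have h8 : Real.sqrt 8 = 2 * Real.sqrt 2 := by
        rw [show (8:ℝ) = 2^2 * 2 by norm_num, Real.sqrt_mul (by positivity),
          Real.sqrt_sq (by norm_num)]
      have h2 : Real.sqrt 8 ≤ Real.sqrt ((L2:ℝ)) :=
        Real.sqrt_le_sqrt (by exact_mod_cast hL)
      have h3 : Real.pi / (2 * Real.sqrt 2) * (2 * Real.sqrt 2) = Real.pi := by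
        field_simp
      rw [h8] at h2
      have h4 := mul_le_mul_of_nonneg_left h2 hcpos.le
      linarith [h3, h1, h4]
    · have h47 : L2 = 4 ∨ L2 = 5 ∨ L2 = 6 ∨ L2 = 7 := by omega
      have hmod : ∀ x y : ZMod 8, x^2 + y^2 ≠ 6 ∧ x^2 + y^2 ≠ 7 := by decide
      have hcast : ((b0 - a0 : ℤ) : ZMod 8)^2 + ((b1 - a1 : ℤ) : ZMod 8)^2
          = ((L2 : ℤ) : ZMod 8) := by rw [hLd]; push_cast; ring
      rcases h47 with h4 | h5 | h6 | h7
      · -- L2 = 4 : impossible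
        exact absurd (h4 ▸ hlag2) (fun hh => caseL4 α p k hα1 hp1 hk hh)
      · -- L2 = 5
        obtain ⟨hpe, hαβ⟩ := caseL5 α β p k hα1 hβ1 hp1 hk (h5 ▸ hlag2) (by omega)
        have hab2 : Real.sqrt (α:ℝ) * Real.sqrt (β:ℝ) = Real.sqrt 2 := by
          rw [hab, show ((α:ℝ) * (β:ℝ)) = ((α * β : ℤ) : ℝ) by push_cast; ring, hαβ]
          norm_num
        have hpR : ((p:ℤ):ℝ) = -1 := by rw [hpe]; norm_num
        rw [hab2, hpR]
        have harg : (-1 : ℝ) / Real.sqrt 2 = -(1 / Real.sqrt 2) := by ring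
        rw [harg, Real.arccos_neg, arccos_inv_sqrt2]
        -- π - π/4 = 3π/4 ≤ π/(2√2) * √5
        have h5R : ((L2:ℤ):ℝ) = 5 := by rw [h5]; norm_num
        rw [h5R]
        rw [div_mul_eq_mul_div, le_div_iff₀ (by positivity)]
        calc (Real.pi - Real.pi/4) * (2 * Real.sqrt 2)
            = Real.pi * ((3:ℝ)/2 * Real.sqrt 2) := by ring
          _ ≤ Real.pi * Real.sqrt 5 := mul_le_mul_of_nonneg_left sqrt5_key hpi.le
      · exact absurd (by rw [hcast, h6]; norm_num : ((b0 - a0 : ℤ) : ZMod 8)^2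
          + ((b1 - a1 : ℤ) : ZMod 8)^2 = 6) (hmod _ _).1
      · exact absurd (by rw [hcast, h7]; norm_num : ((b0 - a0 : ℤ) : ZMod 8)^2
          + ((b1 - a1 : ℤ) : ZMod 8)^2 = 7) (hmod _ _).2


lemma seg_bound (A B : EuclideanSpace ℝ (Fin 2))
    (a0 a1 b0 b1 : ℤ) (hA : A = ![(a0 : ℝ), (a1 : ℝ)]) (hB : B = ![(b0 : ℝ), (b1 : ℝ)])
    (φ : ℝ → ℝ) (hφ : ContinuousOn φ (Icc 0 1))
    (hne : ∀ s ∈ Icc (0:ℝ) 1, (1 - s) • A + s • B ≠ 0)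
    (hang : ∀ s ∈ Icc (0:ℝ) 1,
      (1 - s) • A + s • B = ‖(1 - s) • A + s • B‖ •
        (WithLp.toLp 2 ![Real.cos (φ s), Real.sin (φ s)] : EuclideanSpace ℝ (Fin 2))) :
    φ 1 - φ 0 ≤ Real.pi / (2 * Real.sqrt 2) * ‖B - A‖ := by
  have hcpos : 0 ≤ Real.pi / (2 * Real.sqrt 2) := by positivity
  rcases lift_bound A B φ hφ hne hang with h | ⟨hcross, heq⟩
  · exact le_trans h (by positivity)
  · -- cross positive case
    have hA0 : A 0 = (a0 : ℝ) := by rw [hA]; rfl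
    have hA1 : A 1 = (a1 : ℝ) := by rw [hA]; rfl
    have hB0 : B 0 = (b0 : ℝ) := by rw [hB]; rfl
    have hB1 : B 1 = (b1 : ℝ) := by rw [hB]; rfl
    have hAne : A ≠ 0 := by
      have := hne 0 (by constructor <;> norm_num)
      simpa using this
    have hBne : B ≠ 0 := by
      have := hne 1 (by constructor <;> norm_num)
      simpa using this
    have hAsq : a0^2 + a1^2 ≠ 0 := by
      intro h0
      have h1 : a0 = 0 ∧ a1 = 0 := by
        constructor <;> nlinarith [sq_nonneg a0, sq_nonneg a1]
      apply hAne
      ext i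
      fin_cases i <;> simp [hA0, hA1, h1.1, h1.2] <;> rfl
    have hBsq : b0^2 + b1^2 ≠ 0 := by
      intro h0
      have h1 : b0 = 0 ∧ b1 = 0 := by
        constructor <;> nlinarith [sq_nonneg b0, sq_nonneg b1]
      apply hBne
      ext i
      fin_cases i <;> simp [hB0, hB1, h1.1, h1.2] <;> rfl
    have hkZ : 1 ≤ a0 * b1 - a1 * b0 := by
      have : (0:ℝ) < ((a0 * b1 - a1 * b0 : ℤ) : ℝ) := by
        push_cast
        rw [← hA0, ← hA1, ← hB0, ← hB1]
        exact hcross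
      have : (0:ℤ) < a0 * b1 - a1 * b0 := by exact_mod_cast this
      omega
    have hinner : inner ℝ A B = ((a0 * b0 + a1 * b1 : ℤ) : ℝ) := by
      rw [inner_eq2, hA0, hA1, hB0, hB1]; push_cast; ring
    have hnA : ‖A‖ = Real.sqrt ((a0:ℝ)^2 + (a1:ℝ)^2) := by
      rw [norm_eq2, hA0, hA1]
    have hnB : ‖B‖ = Real.sqrt ((b0:ℝ)^2 + (b1:ℝ)^2) := by
      rw [norm_eq2, hB0, hB1]
    have hnBA : ‖B - A‖ = Real.sqrt (((b0:ℝ) - a0)^2 + ((b1:ℝ) - a1)^2) := by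
      rw [norm_eq2]
      congr 2 <;> simp [PiLp.sub_apply, hA0, hA1, hB0, hB1]
    rw [heq, hinner, hnA, hnB, hnBA]
    exact geomB a0 a1 b0 b1 hAsq hBsq hkZ

end Stmt11Aux

open Set

/-- A broken line `Γ` with integer vertices, parametrized by arc length on `[0,T]`,
avoiding the origin, whose continuous polar angle increases by at least `2πN`,
has length `T ≥ 4√2·N`. -/
theorem stmt11 (m : ℕ) (N : ℕ) (T : ℝ) (hT : 0 < T)
    (P : ℕ → EuclideanSpace ℝ (Fin 2))
    (hlat : ∀ j ≤ m, ∃ a b : ℤ, P j = ![(a : ℝ), (b : ℝ)])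
    (τ : ℕ → ℝ) (hτ0 : τ 0 = 0) (hτm : τ m = T)
    (hmono : ∀ j < m, τ j ≤ τ (j + 1))
    (harc : ∀ j < m, τ (j + 1) - τ j = ‖P (j + 1) - P j‖)
    (γ : ℝ → EuclideanSpace ℝ (Fin 2))
    (hlin : ∀ j < m, ∀ s ∈ Set.Icc (0 : ℝ) 1,
      γ ((1 - s) * τ j + s * τ (j + 1)) = (1 - s) • P j + s • P (j + 1))
    (hne : ∀ t ∈ Set.Icc (0 : ℝ) T, γ t ≠ 0)
    (ω : ℝ → ℝ) (hω : ContinuousOn ω (Set.Icc 0 T))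
    (hangle : ∀ t ∈ Set.Icc (0 : ℝ) T,
      γ t = ‖γ t‖ • (WithLp.toLp 2 ![Real.cos (ω t), Real.sin (ω t)] : EuclideanSpace ℝ (Fin 2)))
    (hwind : 2 * Real.pi * N ≤ ω T - ω 0) :
    4 * Real.sqrt 2 * N ≤ T := by
  classical
  have hpi := Real.pi_pos
  have hs2 := Stmt11Aux.sqrt2_facts
  -- monotonicity of τ
  have hmono' : ∀ i j, i ≤ j → j ≤ m → τ i ≤ τ j := by
    intro i j hij hjm
    induction j with
    | zero =>
      have : i = 0 := Nat.le_zero.mp hij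
      rw [this]
    | succ n ih =>
      rcases Nat.eq_or_lt_of_le hij with h | h
      · rw [h]
      · exact le_trans (ih (by omega) (by omega)) (hmono n (by omega))
  have hτlo : ∀ j ≤ m, 0 ≤ τ j := fun j hj => hτ0 ▸ hmono' 0 j (Nat.zero_le _) hj
  have hτhi : ∀ j ≤ m, τ j ≤ T := fun j hj => hτm ▸ hmono' j m hj le_rfl
  -- per segment bound
  have hseg : ∀ j < m, ω (τ (j+1)) - ω (τ j) ≤
      Real.pi / (2 * Real.sqrt 2) * (τ (j+1) - τ j) := by
    intro j hj
    rcases eq_or_lt_of_le (hmono j hj) with heq | hlt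
    · rw [← heq]
      simp
    · obtain ⟨a0, a1, hA⟩ := hlat j (le_of_lt hj)
      obtain ⟨b0, b1, hB⟩ := hlat (j+1) (by omega)
      set t0 := τ j with ht0
      set t1 := τ (j+1) with ht1
      have hsubT : Icc t0 t1 ⊆ Icc 0 T :=
        Icc_subset_Icc (hτlo j (le_of_lt hj)) (hτhi (j+1) (by omega))
      have hmap : ∀ s ∈ Icc (0:ℝ) 1, (1-s) * t0 + s * t1 ∈ Icc t0 t1 := by
        intro s hs
        constructor <;> nlinarith [hs.1, hs.2, hlt]
      set φ : ℝ → ℝ := fun s => ω ((1-s) * t0 + s * t1) with hφd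
      have hφcont : ContinuousOn φ (Icc 0 1) := by
        apply ContinuousOn.comp (hω.mono hsubT) (Continuous.continuousOn (by fun_prop))
        intro s hs
        exact hmap s hs
      have hlin' := hlin j hj
      have hne' : ∀ s ∈ Icc (0:ℝ) 1, (1 - s) • P j + s • P (j+1) ≠ 0 := by
        intro s hs
        rw [← hlin' s hs]
        exact hne _ (hsubT (hmap s hs))
      have hang' : ∀ s ∈ Icc (0:ℝ) 1,
          (1 - s) • P j + s • P (j+1) = ‖(1 - s) • P j + s • P (j+1)‖ •
            (WithLp.toLp 2 ![Real.cos (φ s), Real.sin (φ s)] : EuclideanSpace ℝ (Fin 2)) := by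
        intro s hs
        rw [← hlin' s hs]
        exact hangle _ (hsubT (hmap s hs))
      have hkey := Stmt11Aux.seg_bound (P j) (P (j+1)) a0 a1 b0 b1 hA hB φ
        hφcont hne' hang'
      have hφ0 : φ 0 = ω t0 := by rw [hφd]; norm_num
      have hφ1 : φ 1 = ω t1 := by rw [hφd]; norm_num
      rw [hφ0, hφ1] at hkey
      rw [harc j hj]
      exact hkey
  -- telescoping
  have htel : ω T - ω 0 = ∑ j ∈ Finset.range m, (ω (τ (j+1)) - ω (τ j)) := by
    rw [Finset.sum_range_sub (fun i => ω (τ i)), hτ0, hτm]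
  have htel2 : (T : ℝ) = ∑ j ∈ Finset.range m, (τ (j+1) - τ j) := by
    rw [Finset.sum_range_sub τ, hτ0, hτm]; ring
  have hsum : ω T - ω 0 ≤ Real.pi / (2 * Real.sqrt 2) * T := by
    rw [htel]
    calc ∑ j ∈ Finset.range m, (ω (τ (j+1)) - ω (τ j))
        ≤ ∑ j ∈ Finset.range m, Real.pi / (2 * Real.sqrt 2) * (τ (j+1) - τ j) :=
          Finset.sum_le_sum (fun j hj => hseg j (Finset.mem_range.1 hj))
      _ = Real.pi / (2 * Real.sqrt 2) * ∑ j ∈ Finset.range m, (τ (j+1) - τ j) := by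
          rw [Finset.mul_sum]
      _ = Real.pi / (2 * Real.sqrt 2) * T := by rw [← htel2]
  have hchain : 2 * Real.pi * N ≤ Real.pi / (2 * Real.sqrt 2) * T := le_trans hwind hsum
  have hs2pos : (0:ℝ) < Real.sqrt 2 := by linarith [hs2.1]
  have h1 : 2 * Real.pi * (N:ℝ) * (2 * Real.sqrt 2)
      ≤ Real.pi / (2 * Real.sqrt 2) * T * (2 * Real.sqrt 2) :=
    mul_le_mul_of_nonneg_right hchain (by positivity)
  have h2 : Real.pi / (2 * Real.sqrt 2) * T * (2 * Real.sqrt 2) = Real.pi * T := by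
    field_simp
  have h3 : Real.pi * (4 * Real.sqrt 2 * (N:ℝ)) ≤ Real.pi * T := by
    have e : 2 * Real.pi * (N:ℝ) * (2 * Real.sqrt 2)
        = Real.pi * (4 * Real.sqrt 2 * (N:ℝ)) := by ring
    rw [← e, ← h2]
    exact h1
  exact le_of_mul_le_mul_left h3 hpi
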